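/- An n-vertex graph G=(V,E) with m edges is super edge-magic if and only if there exists a bijective function f: V → {1,…,n} such that the set L = {f(u)+f(v) : uv ∈ E} consists of m consecutive integers; in such a case, f extends to a super edge-magic labeling of G. -/

import Mathlib

/-- An edge-magic labeling of an `n`-vertex graph `G` with `m` edges and magic constant `k`:
a bijection `f : V ∪ E → {1,…,n+m}` with `f(u)+f(v)+f(uv) = k` for every edge `uv`. -/
def IsEdgeMagicLabeling {V : Type*} [Fintype V] (G : SimpleGraph V)
    (f : V ⊕ ↥G.edgeSet → ℕ) (k : ℕ) : Prop :=
  Set.BijOn f Set.univ (Set.Icc 1 (Fintype.card V + G.edgeSet.ncard)) ∧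
  ∀ (u v : V) (h : G.Adj u v),
    f (Sum.inl u) + f (Sum.inl v) + f (Sum.inr ⟨s(u, v), (G.mem_edgeSet).mpr h⟩) = k

/-- A super edge-magic labeling: an edge-magic labeling whose vertex labels are
exactly `{1,…,n}`. -/
def IsSuperEdgeMagicLabeling {V : Type*} [Fintype V] (G : SimpleGraph V)
    (f : V ⊕ ↥G.edgeSet → ℕ) : Prop :=
  (∃ k, IsEdgeMagicLabeling G f k) ∧
  Set.range (fun v : V => f (Sum.inl v)) = Set.Icc 1 (Fintype.card V)

/-- A graph is super edge-magic if it admits a super edge-magic labeling. -/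
def SuperEdgeMagic {V : Type*} [Fintype V] (G : SimpleGraph V) : Prop :=
  ∃ f, IsSuperEdgeMagicLabeling G f

/-- `f : V → {1,…,n}` is a bijection and `L = {f(u)+f(v) : uv ∈ E}` consists of `m`
consecutive integers, where `m` is the number of edges of `G`. -/
def GoodVertexLabeling {V : Type*} [Fintype V] (G : SimpleGraph V) (f : V → ℕ) : Prop :=
  Set.BijOn f Set.univ (Set.Icc 1 (Fintype.card V)) ∧
  ∃ a : ℕ, {x : ℕ | ∃ u v : V, G.Adj u v ∧ f u + f v = x} = Set.Ico a (a + G.edgeSet.ncard)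

lemma edge_key {V : Type*} [Fintype V] (G : SimpleGraph V) (e : ↥G.edgeSet) :
    ∃ u v, ∃ h : G.Adj u v,
      (⟨s(u,v), (G.mem_edgeSet).mpr h⟩ : ↥G.edgeSet) = e := by
  obtain ⟨e, he⟩ := e
  induction e using Sym2.ind with
  | _ u v => exact ⟨u, v, G.mem_edgeSet.mp he, rfl⟩

lemma card_aux {V : Type*} [Fintype V] (G : SimpleGraph V) :
    Nat.card (V ⊕ ↥G.edgeSet) = Fintype.card V + G.edgeSet.ncard := by
  haveI : Finite ↥G.edgeSet := G.edgeSet.toFinite.to_subtype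
  rw [Nat.card_sum, Nat.card_eq_fintype_card, Nat.card_coe_set_eq]

lemma card_Icc_aux (N : ℕ) : Nat.card ↥(Set.Icc 1 N) = N := by
  rw [Nat.card_coe_set_eq, ← Finset.coe_Icc, Set.ncard_coe_finset, Nat.card_Icc]
  omega

lemma extend_aux {V : Type*} [Fintype V] (G : SimpleGraph V) (f : V → ℕ)
    (hf : GoodVertexLabeling G f) :
    ∃ F : V ⊕ ↥G.edgeSet → ℕ, (∀ v : V, F (Sum.inl v) = f v) ∧
      IsSuperEdgeMagicLabeling G F := by
  classical
  obtain ⟨hbij, a, hS⟩ := hf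
  set n := Fintype.card V with hn
  set m := G.edgeSet.ncard with hm
  haveI : Finite ↥G.edgeSet := G.edgeSet.toFinite.to_subtype
  set s : ↥G.edgeSet → ℕ :=
    fun e => Sym2.lift ⟨fun u v => f u + f v, fun u v => add_comm _ _⟩ e.val with hs
  have hs_eval : ∀ (u v : V) (h : G.Adj u v),
      s ⟨s(u,v), (G.mem_edgeSet).mpr h⟩ = f u + f v := fun u v h => rfl
  have hs_mem : ∀ e : ↥G.edgeSet, s e ∈ Set.Ico a (a + m) := by
    intro e
    obtain ⟨u, v, h, he⟩ := edge_key G e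
    rw [← he, hs_eval u v h, ← hS]
    exact Set.mem_setOf_eq ▸ ⟨u, v, h, rfl⟩
  have hs_surj : ∀ x ∈ Set.Ico a (a + m), ∃ e : ↥G.edgeSet, s e = x := by
    intro x hx
    rw [← hS] at hx
    obtain ⟨u, v, h, hx⟩ := hx
    exact ⟨⟨s(u,v), (G.mem_edgeSet).mpr h⟩, by rw [hs_eval u v h]; exact hx⟩
  set F : V ⊕ ↥G.edgeSet → ℕ := Sum.elim f (fun e => n + m + a - s e) with hF
  have hmaps : ∀ x : V ⊕ ↥G.edgeSet, F x ∈ Set.Icc 1 (n + m) := by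
    rintro (v | e)
    · have := hbij.1 (Set.mem_univ v)
      simp only [hF, Sum.elim_inl, Set.mem_Icc] at this ⊢
      omega
    · have := hs_mem e
      simp only [Set.mem_Ico] at this
      simp only [hF, Sum.elim_inr, Set.mem_Icc]
      omega
  have hsurj : ∀ y ∈ Set.Icc 1 (n + m), ∃ x, F x = y := by
    intro y hy
    simp only [Set.mem_Icc] at hy
    by_cases hyn : y ≤ n
    · obtain ⟨v, -, hv⟩ := hbij.2.2 (Set.mem_Icc.mpr ⟨hy.1, hyn⟩)
      exact ⟨Sum.inl v, hv⟩
    · obtain ⟨e, he⟩ := hs_surj (n + m + a - y) (Set.mem_Ico.mpr (by omega))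
      refine ⟨Sum.inr e, ?_⟩
      simp only [hF, Sum.elim_inr, he]
      omega
  -- bijectivity via cardinality
  have hbijF : Function.Bijective (fun x : V ⊕ ↥G.edgeSet => (⟨F x, hmaps x⟩ : ↥(Set.Icc 1 (n + m)))) := by
    rw [Nat.bijective_iff_surjective_and_card]
    constructor
    · rintro ⟨y, hy⟩
      obtain ⟨x, hx⟩ := hsurj y hy
      exact ⟨x, Subtype.ext hx⟩
    · rw [card_aux, card_Icc_aux]
  have hinjF : Set.InjOn F Set.univ := by
    intro x _ y _ hxy
    exact hbijF.1 (Subtype.ext hxy)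
  refine ⟨F, fun v => rfl, ⟨n + m + a, ⟨⟨fun x _ => hmaps x, hinjF, ?_⟩, ?_⟩⟩, ?_⟩
  · intro y hy
    obtain ⟨x, hx⟩ := hsurj y hy
    exact ⟨x, Set.mem_univ x, hx⟩
  · intro u v h
    have hmem : f u + f v ∈ Set.Ico a (a + m) := by
      rw [← hS]; exact ⟨u, v, h, rfl⟩
    simp only [Set.mem_Ico] at hmem
    simp only [hF, Sum.elim_inl, Sum.elim_inr]
    rw [hs_eval u v h]
    omega
  · have himg : f '' Set.univ = Set.Icc 1 n := hbij.image_eq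
    rw [Set.image_univ] at himg
    exact himg

lemma forward_aux {V : Type*} [Fintype V] (G : SimpleGraph V)
    (hG : SuperEdgeMagic G) : ∃ f : V → ℕ, GoodVertexLabeling G f := by
  classical
  obtain ⟨F, ⟨k, hbij, hmagic⟩, hrange⟩ := hG
  set n := Fintype.card V with hn
  set m := G.edgeSet.ncard with hm
  set f : V → ℕ := fun v => F (Sum.inl v) with hf
  have hfbij : Set.BijOn f Set.univ (Set.Icc 1 n) := by
    refine ⟨fun v _ => ?_, fun x _ y _ hxy => ?_, fun y hy => ?_⟩
    · rw [← hrange]; exact ⟨v, rfl⟩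
    · exact Sum.inl_injective (hbij.2.1 (Set.mem_univ _) (Set.mem_univ _) hxy)
    · rw [← hrange] at hy
      obtain ⟨v, hv⟩ := hy
      exact ⟨v, Set.mem_univ v, hv⟩
  refine ⟨f, hfbij, ?_⟩
  -- vertex labels are in Icc 1 n; edge labels are exactly Icc (n+1) (n+m)
  have hvle : ∀ v : V, F (Sum.inl v) ∈ Set.Icc 1 n := fun v => hfbij.1 (Set.mem_univ v)
  have hele : ∀ e : ↥G.edgeSet, F (Sum.inr e) ∈ Set.Icc (n+1) (n+m) := by
    intro e
    have h1 : F (Sum.inr e) ∈ Set.Icc 1 (n + m) := hbij.1 (Set.mem_univ _)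
    simp only [Set.mem_Icc] at h1 ⊢
    refine ⟨?_, h1.2⟩
    by_contra hle
    push_neg at hle
    have : F (Sum.inr e) ∈ Set.Icc 1 n := Set.mem_Icc.mpr ⟨h1.1, by omega⟩
    rw [← hrange] at this
    obtain ⟨v, hv⟩ := this
    exact Sum.inl_ne_inr (hbij.2.1 (Set.mem_univ _) (Set.mem_univ _) hv)
  have hesurj : ∀ j ∈ Set.Icc (n+1) (n+m), ∃ e : ↥G.edgeSet, F (Sum.inr e) = j := by
    intro j hj
    simp only [Set.mem_Icc] at hj
    obtain ⟨x, -, hx⟩ := hbij.2.2 (Set.mem_Icc.mpr ⟨by omega, hj.2⟩)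
    cases x with
    | inl v =>
      have := hvle v
      simp only [Set.mem_Icc] at this
      omega
    | inr e => exact ⟨e, hx⟩
  by_cases hE : G.edgeSet = ∅
  · refine ⟨0, ?_⟩
    have hm0 : m = 0 := by rw [hm, hE, Set.ncard_empty]
    rw [← hm, hm0]
    ext x
    simp only [Set.mem_setOf_eq, Set.mem_Ico, add_zero]
    constructor
    · rintro ⟨u, v, h, -⟩
      exact absurd (G.mem_edgeSet.mpr h) (hE ▸ id)
    · omega
  · -- nonempty case
    have hmpos : 0 < m := by
      rw [hm, Set.ncard_pos G.edgeSet.toFinite]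
      exact Set.nonempty_iff_ne_empty.mpr hE
    -- get k ≥ n + m + 3
    obtain ⟨e0, he0⟩ := hesurj (n + m) (Set.mem_Icc.mpr ⟨by omega, le_refl _⟩)
    obtain ⟨u0, v0, h0, he0eq⟩ := edge_key G e0
    have hk : k = f u0 + f v0 + (n + m) := by
      rw [← hmagic u0 v0 h0, he0eq, he0]
    have hfu0 : f u0 ∈ Set.Icc 1 n := hvle u0
    have hfv0 : f v0 ∈ Set.Icc 1 n := hvle v0
    have hne : f u0 ≠ f v0 := fun hEq =>
      h0.ne (Sum.inl_injective (hbij.2.1 (Set.mem_univ _) (Set.mem_univ _) hEq))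
    have hkge : n + m + 3 ≤ k := by
      simp only [Set.mem_Icc] at hfu0 hfv0
      omega
    refine ⟨k - (n + m), ?_⟩
    ext x
    simp only [Set.mem_setOf_eq, Set.mem_Ico]
    constructor
    · rintro ⟨u, v, h, hx⟩
      have hmag := hmagic u v h
      have hel := hele ⟨s(u,v), (G.mem_edgeSet).mpr h⟩
      simp only [Set.mem_Icc] at hel
      change f u + f v + _ = k at hmag
      omega
    · rintro ⟨hx1, hx2⟩
      obtain ⟨e, he⟩ := hesurj (k - x) (Set.mem_Icc.mpr ⟨by omega, by omega⟩)
      obtain ⟨u, v, h, heeq⟩ := edge_key G e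
      have hmag := hmagic u v h
      rw [heeq, he] at hmag
      change f u + f v + _ = k at hmag
      exact ⟨u, v, h, by omega⟩

/-- Figueroa-Centeno–Ichishima–Muntaner-Batle.  An `n`-vertex graph `G`
with `m` edges is super edge-magic if and only if there is a bijection `f : V → {1,…,n}`
such that `{f(u)+f(v) : uv ∈ E}` consists of `m` consecutive integers; in such a case,
`f` extends to a super edge-magic labeling of `G`. -/
theorem super_edge_magic_iff_good_vertex_labeling
    {V : Type*} [Fintype V] (G : SimpleGraph V) :
    (SuperEdgeMagic G ↔ ∃ f : V → ℕ, GoodVertexLabeling G f) ∧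
    ∀ f : V → ℕ, GoodVertexLabeling G f →
      ∃ F : V ⊕ ↥G.edgeSet → ℕ, (∀ v : V, F (Sum.inl v) = f v) ∧
        IsSuperEdgeMagicLabeling G F := by
  refine ⟨⟨forward_aux G, ?_⟩, fun f hf => extend_aux G f hf⟩
  rintro ⟨f, hf⟩
  obtain ⟨F, -, hF⟩ := extend_aux G f hf
  exact ⟨F, hF⟩
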